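/- If F and G are matchings in a graph with |G| > |F|, then the union of their edge sets contains an F-augmenting alternating path, i.e., a path whose edges alternate between G\F and F, starting and ending at vertices not covered by F. -/

import Mathlib

variable {V : Type*}

/-- A matching: a set of non-loop edges that are pairwise vertex-disjoint. -/
def IsMatching (M : Set (Sym2 V)) : Prop :=
  (∀ e ∈ M, ¬ e.IsDiag) ∧ ∀ e ∈ M, ∀ f ∈ M, e ≠ f → ∀ v, v ∈ e → v ∉ f

/-- A vertex is covered by an edge set if it belongs to some edge. -/
def covered (M : Set (Sym2 V)) (v : V) : Prop := ∃ e ∈ M, v ∈ e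

/-- A `K`–`F`-alternating path: a (simple) nonempty list of vertices whose
odd-numbered edges (0-indexed: even positions) lie in `K` and even-numbered edges lie in `F`. -/
def AltPath (K F : Set (Sym2 V)) (p : List V) : Prop :=
  p ≠ [] ∧ p.Nodup ∧ ∀ i, ∀ h : i + 1 < p.length,
    s(p[i]'(Nat.lt_of_succ_lt h), p[i+1]'h) ∈ (if i % 2 = 0 then K else F)

/- ### Auxiliary lemmas -/

private lemma getElem_congr' {α : Type*} {l : List α} {i j : ℕ} (h : i = j)
    (hj : j < l.length) : l[i]'(h ▸ hj) = l[j] := by subst h; rfl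

private lemma matching_subset {M N : Finset (Sym2 V)} (h : N ⊆ M)
    (hM : IsMatching (M : Set (Sym2 V))) : IsMatching (N : Set (Sym2 V)) := by
  refine ⟨fun e he => hM.1 e (h he), fun e he f hf => hM.2 e (h he) f (h hf)⟩

private def pairF [DecidableEq V] (e : Sym2 V) : Finset V :=
  Sym2.lift ⟨fun a b => {a, b}, fun a b => Finset.pair_comm a b⟩ e

private lemma mem_pairF [DecidableEq V] {v : V} {e : Sym2 V} : v ∈ pairF e ↔ v ∈ e := by
  induction e using Sym2.ind with
  | _ a b => simp [pairF, Sym2.mem_iff]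

private lemma card_pairF [DecidableEq V] {e : Sym2 V} (h : ¬ e.IsDiag) :
    (pairF e).card = 2 := by
  induction e using Sym2.ind with
  | _ a b =>
    rw [Sym2.mk_isDiag_iff] at h
    simp [pairF, Finset.card_pair h]

private def supp [DecidableEq V] (M : Finset (Sym2 V)) : Finset V := M.biUnion pairF

private lemma covered_iff_mem_supp [DecidableEq V] {M : Finset (Sym2 V)} {v : V} :
    covered (M : Set (Sym2 V)) v ↔ v ∈ supp M := by
  simp [covered, supp, mem_pairF]

private lemma card_supp [DecidableEq V] {M : Finset (Sym2 V)}
    (hM : IsMatching (M : Set (Sym2 V))) : (supp M).card = 2 * M.card := by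
  rw [supp, Finset.card_biUnion]
  · rw [Finset.sum_congr rfl fun e he => card_pairF (hM.1 e he)]
    simp [mul_comm]
  · intro e he f hf hef
    rw [Function.onFun, Finset.disjoint_left]
    intro v hv hvf
    exact hM.2 e he f hf hef v (mem_pairF.mp hv) (mem_pairF.mp hvf)

private lemma exists_uncov [DecidableEq V] {F G : Finset (Sym2 V)}
    (hF : IsMatching (F : Set (Sym2 V))) (hG : IsMatching (G : Set (Sym2 V)))
    (hlt : F.card < G.card) :
    ∃ v, covered (G : Set (Sym2 V)) v ∧ ¬ covered (F : Set (Sym2 V)) v := by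
  by_contra hcon
  push_neg at hcon
  have hsub : supp G ⊆ supp F := by
    intro v hv
    exact covered_iff_mem_supp.mp (hcon v (covered_iff_mem_supp.mpr hv))
  have := Finset.card_le_card hsub
  rw [card_supp hF, card_supp hG] at this
  omega

private lemma altPath_mono {K K' F F' : Set (Sym2 V)} {p : List V}
    (hK : K ⊆ K') (hF : F ⊆ F') (h : AltPath K F p) : AltPath K' F' p := by
  obtain ⟨h1, h2, h3⟩ := h
  refine ⟨h1, h2, fun i hi => ?_⟩
  have := h3 i hi
  by_cases hi2 : i % 2 = 0
  · rw [if_pos hi2] at this ⊢; exact hK this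
  · rw [if_neg hi2] at this ⊢; exact hF this

private lemma altPath_edge_union {K F : Set (Sym2 V)} {p : List V}
    (h : AltPath K F p) {j : ℕ} (hj : j + 1 < p.length) :
    s(p[j]'(Nat.lt_of_succ_lt hj), p[j+1]'hj) ∈ K ∪ F := by
  have := h.2.2 j hj
  by_cases h2 : j % 2 = 0
  · rw [if_pos h2] at this; exact Or.inl this
  · rw [if_neg h2] at this; exact Or.inr this

private lemma altPath_covered {K F : Set (Sym2 V)} {p : List V} {v : V}
    (h : AltPath K F p) (hlen : 2 ≤ p.length) (hv : v ∈ p) :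
    ∃ e ∈ K ∪ F, v ∈ e := by
  obtain ⟨i, hi, rfl⟩ := List.mem_iff_getElem.mp hv
  by_cases hi1 : i + 1 < p.length
  · exact ⟨_, altPath_edge_union h hi1, Sym2.mem_mk_left _ _⟩
  · have hj : (i - 1) + 1 < p.length := by omega
    refine ⟨_, altPath_edge_union h hj, ?_⟩
    have he : p[(i-1)+1]'hj = p[i]'hi := getElem_congr' (by omega) hi
    rw [he]
    exact Sym2.mem_mk_right _ _

private lemma altPath_reverse {K F : Set (Sym2 V)} {p : List V}
    (h : AltPath K F p) (heven : Even p.length) : AltPath K F p.reverse := by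
  obtain ⟨h1, h2, h3⟩ := h
  refine ⟨by simpa using h1, List.nodup_reverse.mpr h2, fun i hi => ?_⟩
  have hL : p.reverse.length = p.length := p.length_reverse
  have hi' : i + 1 < p.length := hL ▸ hi
  have hj : (p.length - 2 - i) + 1 < p.length := by omega
  have hpar : (p.length - 2 - i) % 2 = i % 2 := by
    obtain ⟨k, hk⟩ := heven; omega
  have key := h3 (p.length - 2 - i) hj
  rw [hpar] at key
  have e1 : p.reverse[i]'(Nat.lt_of_succ_lt hi) = p[(p.length-2-i)+1]'hj := by
    rw [List.getElem_reverse]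
    exact getElem_congr' (by omega) hj
  have e2 : p.reverse[i+1]'hi = p[p.length-2-i]'(Nat.lt_of_succ_lt hj) := by
    rw [List.getElem_reverse]
    exact getElem_congr' (by omega) (Nat.lt_of_succ_lt hj)
  rw [e1, e2, Sym2.eq_swap]
  exact key

private lemma altPath_cons2 {K F : Set (Sym2 V)} {v w : V} {p : List V}
    (hp : AltPath K F p) (hv : v ∉ p) (hw : w ∉ p) (hvw : v ≠ w)
    (h1 : s(v, w) ∈ K) (h2 : s(w, p.head hp.1) ∈ F) : AltPath K F (v :: w :: p) := by
  obtain ⟨hne, hnd, hedge⟩ := hp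
  refine ⟨by simp, by simp [List.nodup_cons, hv, hw, hvw, hnd], fun i hi => ?_⟩
  rcases i with _ | _ | i
  · simpa using h1
  · have : p.head hne = p[0]'(by simp at hi; omega) := List.head_eq_getElem hne
    rw [this] at h2
    simpa using h2
  · have hi' : i + 1 < p.length := by simp at hi; omega
    have := hedge i hi'
    have hpar : (i + 1 + 1) % 2 = i % 2 := by omega
    rw [hpar]
    simpa using this

/-- The core lemma: if `F` and `G` are matchings with `|F| < |G|`, there is an
alternating path with `G`-edges and `F`-edges, both endpoints uncovered by `F`. -/
private lemma berge_aux [DecidableEq V] :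
    ∀ (n : ℕ) (F G : Finset (Sym2 V)), F.card < n →
    IsMatching (F : Set (Sym2 V)) → IsMatching (G : Set (Sym2 V)) → F.card < G.card →
    ∃ (p : List V) (hp : p ≠ []),
      AltPath (G : Set (Sym2 V)) (F : Set (Sym2 V)) p ∧ Even p.length ∧
      ¬ covered (↑F) (p.head hp) ∧ ¬ covered (↑F) (p.getLast hp) := by
  intro n
  induction n with
  | zero => intro F G h; omega
  | succ m ih =>
    intro F G hcard hF hG hlt
    obtain ⟨v, hvG, hvF⟩ := exists_uncov hF hG hlt
    obtain ⟨e, heG, hve⟩ := hvG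
    rw [Finset.mem_coe] at heG
    obtain ⟨w, rfl⟩ := Sym2.mem_iff_exists.mp hve
    have hvw : v ≠ w := by
      have := hG.1 _ (Finset.mem_coe.mpr heG)
      rwa [Sym2.mk_isDiag_iff] at this
    have heF : s(v, w) ∉ F := fun hc => hvF ⟨_, hc, Sym2.mem_mk_left _ _⟩
    by_cases hwF : covered (F : Set (Sym2 V)) w
    · -- w is covered by an F-edge f = s(w,x); recurse on F.erase f, G.erase e
      obtain ⟨f, hfF, hwf⟩ := hwF
      rw [Finset.mem_coe] at hfF
      obtain ⟨x, rfl⟩ := Sym2.mem_iff_exists.mp hwf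
      have hwx : w ≠ x := by
        have := hF.1 _ (Finset.mem_coe.mpr hfF)
        rwa [Sym2.mk_isDiag_iff] at this
      have hvf : v ∉ s(w, x) := fun hc => hvF ⟨_, Finset.mem_coe.mpr hfF, hc⟩
      have hvx : v ≠ x := fun hc => hvf (hc ▸ Sym2.mem_mk_right _ _)
      set F' := F.erase s(w, x) with hF'def
      set G' := G.erase s(v, w) with hG'def
      have hF'sub : F' ⊆ F := Finset.erase_subset _ _
      have hG'sub : G' ⊆ G := Finset.erase_subset _ _
      have hF'm : IsMatching (F' : Set (Sym2 V)) := matching_subset hF'sub hF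
      have hG'm : IsMatching (G' : Set (Sym2 V)) := matching_subset hG'sub hG
      have hcF' : F'.card = F.card - 1 := Finset.card_erase_of_mem hfF
      have hcG' : G'.card = G.card - 1 := Finset.card_erase_of_mem heG
      have hFpos : 1 ≤ F.card := Finset.card_pos.mpr ⟨_, hfF⟩
      obtain ⟨p, hp, altp, heven, hh, hl⟩ :=
        ih F' G' (by omega) hF'm hG'm (by omega)
      have hlen2 : 2 ≤ p.length := by
        rcases heven with ⟨k, hk⟩
        have : p.length ≠ 0 := fun hc => hp (List.eq_nil_of_length_eq_zero hc)
        omega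
      -- v and w do not occur in p
      have hvnotp : v ∉ p := by
        intro hc
        obtain ⟨e', he', hve'⟩ := altPath_covered altp hlen2 hc
        rcases he' with he' | he'
        · rw [Finset.mem_coe, hG'def, Finset.mem_erase] at he'
          exact hG.2 _ (Finset.mem_coe.mpr heG) _ (Finset.mem_coe.mpr he'.2)
            (Ne.symm he'.1) v (Sym2.mem_mk_left _ _) hve'
        · rw [Finset.mem_coe] at he'
          exact hvF ⟨_, Finset.mem_coe.mpr (hF'sub he'), hve'⟩
      have hwnotp : w ∉ p := by
        intro hc
        obtain ⟨e', he', hwe'⟩ := altPath_covered altp hlen2 hc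
        rcases he' with he' | he'
        · rw [Finset.mem_coe, hG'def, Finset.mem_erase] at he'
          exact hG.2 _ (Finset.mem_coe.mpr heG) _ (Finset.mem_coe.mpr he'.2)
            (Ne.symm he'.1) w (Sym2.mem_mk_right _ _) hwe'
        · rw [Finset.mem_coe, hF'def, Finset.mem_erase] at he'
          exact hF.2 _ (Finset.mem_coe.mpr hfF) _ (Finset.mem_coe.mpr he'.2)
            (Ne.symm he'.1) w (Sym2.mem_mk_left _ _) hwe'
      -- arrange that the last vertex of the path is not x
      obtain ⟨q, hq, altq, hevq, hhq, hlq, hlqx⟩ :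
          ∃ (q : List V) (hq : q ≠ []),
            AltPath (G' : Set (Sym2 V)) (F' : Set (Sym2 V)) q ∧ Even q.length ∧
            ¬ covered (↑F') (q.head hq) ∧ ¬ covered (↑F') (q.getLast hq) ∧
            q.getLast hq ≠ x := by
        by_cases hlx : p.getLast hp = x
        · have hrne : p.reverse ≠ [] := by simpa using hp
          refine ⟨p.reverse, hrne, altPath_reverse altp heven, by simpa using heven, ?_, ?_, ?_⟩
          · rw [List.head_reverse]; exact hl
          · rw [List.getLast_reverse]; exact hh
          · rw [List.getLast_reverse]
            intro hc
            have hne2 : p.head hp ≠ p.getLast hp := by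
              rw [List.head_eq_getElem, List.getLast_eq_getElem]
              intro hc
              have := (altp.2.1.getElem_inj_iff).mp hc
              omega
            exact hne2 (hc.trans hlx.symm)
        · exact ⟨p, hp, altp, heven, hh, hl, hlx⟩
      have hqlen2 : 2 ≤ q.length := by
        rcases hevq with ⟨k, hk⟩
        have : q.length ≠ 0 := fun hc => hq (List.eq_nil_of_length_eq_zero hc)
        omega
      have hvnotq : v ∉ q := by
        intro hc
        obtain ⟨e', he', hve'⟩ := altPath_covered altq hqlen2 hc
        rcases he' with he' | he'
        · rw [Finset.mem_coe, hG'def, Finset.mem_erase] at he'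
          exact hG.2 _ (Finset.mem_coe.mpr heG) _ (Finset.mem_coe.mpr he'.2)
            (Ne.symm he'.1) v (Sym2.mem_mk_left _ _) hve'
        · rw [Finset.mem_coe] at he'
          exact hvF ⟨_, Finset.mem_coe.mpr (hF'sub he'), hve'⟩
      have hwnotq : w ∉ q := by
        intro hc
        obtain ⟨e', he', hwe'⟩ := altPath_covered altq hqlen2 hc
        rcases he' with he' | he'
        · rw [Finset.mem_coe, hG'def, Finset.mem_erase] at he'
          exact hG.2 _ (Finset.mem_coe.mpr heG) _ (Finset.mem_coe.mpr he'.2)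
            (Ne.symm he'.1) w (Sym2.mem_mk_right _ _) hwe'
        · rw [Finset.mem_coe, hF'def, Finset.mem_erase] at he'
          exact hF.2 _ (Finset.mem_coe.mpr hfF) _ (Finset.mem_coe.mpr he'.2)
            (Ne.symm he'.1) w (Sym2.mem_mk_left _ _) hwe'
      have altqFG : AltPath (G : Set (Sym2 V)) (F : Set (Sym2 V)) q :=
        altPath_mono (by exact_mod_cast hG'sub) (by exact_mod_cast hF'sub) altq
      -- a vertex of q other than w, x that is uncovered by F' is uncovered by F
      have uncov_lift : ∀ u, u ∈ q → u ≠ x → ¬ covered (↑F') u → ¬ covered (F : Set (Sym2 V)) u := by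
        intro u huq hux hu' ⟨g, hgF, hug⟩
        rw [Finset.mem_coe] at hgF
        by_cases hgf : g = s(w, x)
        · subst hgf
          rw [Sym2.mem_iff] at hug
          rcases hug with rfl | rfl
          · exact hwnotq huq
          · exact hux rfl
        · exact hu' ⟨g, Finset.mem_coe.mpr (Finset.mem_erase.mpr ⟨hgf, hgF⟩), hug⟩
      by_cases hqx : q.head hq = x
      · -- prepend v, w
        refine ⟨v :: w :: q, by simp, ?_, ?_, ?_, ?_⟩
        · refine altPath_cons2 altqFG hvnotq hwnotq hvw (Finset.mem_coe.mpr heG) ?_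
          rw [hqx]
          exact Finset.mem_coe.mpr hfF
        · simpa [Nat.even_add] using hevq
        · simpa using hvF
        · have : (v :: w :: q).getLast (by simp) = q.getLast hq := by
            rw [List.getLast_cons (by simp [hq]), List.getLast_cons hq]
          rw [this]
          exact uncov_lift _ (List.getLast_mem hq) hlqx hlq
      · -- q itself works
        refine ⟨q, hq, altqFG, hevq, ?_, ?_⟩
        · exact uncov_lift _ (List.head_mem hq) hqx hhq
        · exact uncov_lift _ (List.getLast_mem hq) hlqx hlq
    · -- w is uncovered by F : the path [v, w] is augmenting
      refine ⟨[v, w], by simp, ⟨by simp, by simp [hvw], fun i hi => ?_⟩, by simp, by simpa using hvF, by simpa using hwF⟩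
      have hi0 : i = 0 := by simp at hi; omega
      subst hi0
      simpa using Finset.mem_coe.mpr heG

/-- If `F` and `G` are matchings with `|G| > |F|`, then `F ∪ G` contains an
`F`-augmenting alternating path: its non-`F` edges lie in `G \ F`, it has an odd number of
edges (even number of vertices), and both endpoints are uncovered by `F`. -/
theorem stmt_0 {V : Type*} [DecidableEq V] (F G : Finset (Sym2 V))
    (hF : IsMatching (F : Set (Sym2 V))) (hG : IsMatching (G : Set (Sym2 V)))
    (hlt : F.card < G.card) :
    ∃ (p : List V) (hp : p ≠ []),
      AltPath (↑(G \ F)) (↑F : Set (Sym2 V)) p ∧ Even p.length ∧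
      ¬ covered (↑F) (p.head hp) ∧ ¬ covered (↑F) (p.getLast hp) := by
  have hF0 : IsMatching ((F \ G : Finset (Sym2 V)) : Set (Sym2 V)) :=
    matching_subset (Finset.sdiff_subset) hF
  have hG0 : IsMatching ((G \ F : Finset (Sym2 V)) : Set (Sym2 V)) :=
    matching_subset (Finset.sdiff_subset) hG
  have hc : (F \ G).card < (G \ F).card := by
    have h1 := Finset.card_sdiff_add_card_inter F G
    have h2 := Finset.card_sdiff_add_card_inter G F
    rw [Finset.inter_comm] at h2
    omega
  obtain ⟨p, hp, altp, heven, hh, hl⟩ :=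
    berge_aux ((F \ G).card + 1) (F \ G) (G \ F) (by omega) hF0 hG0 hc
  have hlen2 : 2 ≤ p.length := by
    rcases heven with ⟨k, hk⟩
    have : p.length ≠ 0 := fun hc => hp (List.eq_nil_of_length_eq_zero hc)
    omega
  refine ⟨p, hp, altPath_mono (le_refl _) ?_ altp, heven, ?_, ?_⟩
  · exact_mod_cast (Finset.sdiff_subset : F \ G ⊆ F)
  · -- head uncovered by F
    intro ⟨g, hgF, hmem⟩
    rw [Finset.mem_coe] at hgF
    by_cases hgG : g ∈ G
    · -- g ∈ F ∩ G; but head is in the first edge, which is in G \ F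
      have h01 : (1 : ℕ) < p.length := by omega
      have hedge := altp.2.2 0 h01
      rw [if_pos rfl] at hedge
      rw [Finset.mem_coe, Finset.mem_sdiff] at hedge
      have hne : g ≠ s(p[0]'(by omega), p[1]'h01) := by
        intro hc; rw [hc] at hgF
        exact hedge.2 hgF
      have hhead : p.head hp = p[0]'(by omega) := List.head_eq_getElem hp
      rw [hhead] at hmem
      exact hG.2 _ (Finset.mem_coe.mpr hgG) _ (Finset.mem_coe.mpr hedge.1) hne
        _ hmem (Sym2.mem_mk_left _ _)
    · exact hh ⟨g, Finset.mem_coe.mpr (Finset.mem_sdiff.mpr ⟨hgF, hgG⟩), hmem⟩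
  · -- last uncovered by F
    intro ⟨g, hgF, hmem⟩
    rw [Finset.mem_coe] at hgF
    by_cases hgG : g ∈ G
    · have hL : (p.length - 2) + 1 < p.length := by omega
      have hedge := altp.2.2 (p.length - 2) hL
      have hpar : (p.length - 2) % 2 = 0 := by
        rcases heven with ⟨k, hk⟩; omega
      rw [if_pos hpar] at hedge
      rw [Finset.mem_coe, Finset.mem_sdiff] at hedge
      have hne : g ≠ s(p[p.length-2]'(by omega), p[(p.length-2)+1]'hL) := by
        intro hc; rw [hc] at hgF
        exact hedge.2 hgF
      have hlast : p.getLast hp = p[(p.length-2)+1]'hL := by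
        rw [List.getLast_eq_getElem]
        exact getElem_congr' (by omega) hL
      rw [hlast] at hmem
      exact hG.2 _ (Finset.mem_coe.mpr hgG) _ (Finset.mem_coe.mpr hedge.1) hne
        _ hmem (Sym2.mem_mk_right _ _)
    · exact hl ⟨g, Finset.mem_coe.mpr (Finset.mem_sdiff.mpr ⟨hgF, hgG⟩), hmem⟩
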